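/- Let n : ℝ → S² ⊂ ℝ³ and N : ℝ → S² be smooth curves with n = g N for a smooth curve g in SO₃ satisfying g' = a_ω g, and suppose g N' = n' and |n'(t)| ≠ 0. If the spherical geodesic curvatures k of n and K of N are defined by γ'' ≡ k_γ [γ, γ'] mod (γ, γ') in arc-length parametrization, then K(t) = k(t) − |ω(t)|/|ṅ(t)|, where ṅ is the derivative with respect to the common parameter t. -/

import Mathlib

open Matrix
attribute [local instance] Matrix.linftyOpNormedAddCommGroup Matrix.linftyOpNormedSpace

/-- The matrix `a_ω` of the map `x ↦ ω × x`. -/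
def hatMap (u : Fin 3 → ℝ) : Matrix (Fin 3) (Fin 3) ℝ :=
  !![0, -u 2, u 1; u 2, 0, -u 0; -u 1, u 0, 0]

/-- Euclidean norm of a vector in `ℝ³`. -/
noncomputable def norm3 (u : Fin 3 → ℝ) : ℝ :=
  Real.sqrt (u 0 ^ 2 + u 1 ^ 2 + u 2 ^ 2)

set_option linter.unusedVariables false

lemma dot3 (u v : Fin 3 → ℝ) : u ⬝ᵥ v = u 0 * v 0 + u 1 * v 1 + u 2 * v 2 := by
  simp [dotProduct, Fin.sum_univ_three]

lemma norm3_sq (u : Fin 3 → ℝ) : norm3 u ^ 2 = u ⬝ᵥ u := by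
  rw [dot3, norm3, Real.sq_sqrt] <;> nlinarith [sq_nonneg (u 0), sq_nonneg (u 1), sq_nonneg (u 2)]

lemma hatMap_mulVec (u v : Fin 3 → ℝ) : hatMap u *ᵥ v = crossProduct u v := by
  ext i
  fin_cases i <;>
    simp [hatMap, crossProduct, mulVec, dotProduct, Fin.sum_univ_three] <;> ring

lemma dot_mulVec_same (g : Matrix (Fin 3) (Fin 3) ℝ) (h : gᵀ * g = 1) (u v : Fin 3 → ℝ) :
    (g *ᵥ u) ⬝ᵥ (g *ᵥ v) = u ⬝ᵥ v := by
  rw [Matrix.dotProduct_mulVec, ← Matrix.vecMul_transpose, Matrix.vecMul_vecMul, h,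
    Matrix.vecMul_one]


lemma mulVec_cross (g : Matrix (Fin 3) (Fin 3) ℝ) (horth : g * gᵀ = 1) (hdet : g.det = 1)
    (u v : Fin 3 → ℝ) :
    g *ᵥ (crossProduct u v) = crossProduct (g *ᵥ u) (g *ᵥ v) := by
  have h' : gᵀ * g = 1 := mul_eq_one_comm.mp horth
  have key : ∀ y : Fin 3 → ℝ, y ⬝ᵥ (g *ᵥ crossProduct u v) =
      y ⬝ᵥ (crossProduct (g *ᵥ u) (g *ᵥ v)) := by
    intro y
    have hy : g *ᵥ (gᵀ *ᵥ y) = y := by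
      rw [Matrix.mulVec_mulVec, horth, Matrix.one_mulVec]
    set w := gᵀ *ᵥ y with hw
    have h1 : y ⬝ᵥ (g *ᵥ crossProduct u v) = w ⬝ᵥ crossProduct u v := by
      rw [← hy, dot_mulVec_same g h']
    have hmat : ![g *ᵥ w, g *ᵥ u, g *ᵥ v] = (Matrix.of ![w, u, v]) * gᵀ := by
      ext i j
      fin_cases i <;>
        simp [Matrix.mul_apply, Matrix.mulVec, dotProduct, mul_comm]
    have h2 : y ⬝ᵥ (crossProduct (g *ᵥ u) (g *ᵥ v)) = w ⬝ᵥ crossProduct u v := by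
      rw [← hy, triple_product_eq_det, congrArg Matrix.det hmat, Matrix.det_mul,
        Matrix.det_transpose, hdet, mul_one]
      exact (triple_product_eq_det w u v).symm
    rw [h1, h2]
  ext i
  have := key (Pi.single i 1)
  simpa [single_dotProduct] using this

lemma hasDerivAt_entry {g : ℝ → Matrix (Fin 3) (Fin 3) ℝ} {G : Matrix (Fin 3) (Fin 3) ℝ}
    {t : ℝ} (hg : HasDerivAt g G t) (i j : Fin 3) :
    HasDerivAt (fun s => g s i j) (G i j) t := by
  have := ((Matrix.entryLinearMap ℝ ℝ i j).toContinuousLinearMap.hasFDerivAt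
    (x := g t)).comp_hasDerivAt t hg
  exact this

lemma hasDerivAt_mulVec {g : ℝ → Matrix (Fin 3) (Fin 3) ℝ} {v : ℝ → Fin 3 → ℝ}
    {G : Matrix (Fin 3) (Fin 3) ℝ} {V : Fin 3 → ℝ} {t : ℝ}
    (hg : HasDerivAt g G t) (hv : HasDerivAt v V t) :
    HasDerivAt (fun s => g s *ᵥ v s) (G *ᵥ v t + g t *ᵥ V) t := by
  rw [hasDerivAt_pi]
  intro i
  have hvj : ∀ j, HasDerivAt (fun s => v s j) (V j) t := fun j => (hasDerivAt_pi.mp hv) j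
  have : HasDerivAt (fun s => ∑ j, g s i j * v s j)
      (∑ j, (G i j * v t j + g t i j * V j)) t :=
    HasDerivAt.fun_sum fun j _ => (hasDerivAt_entry hg i j).mul (hvj j)
  simpa [Matrix.mulVec, dotProduct, Finset.sum_add_distrib] using this

/-- Relation between the spherical geodesic curvatures of the rolling curves:
`K = k − |ω|/|ṅ|`. The curvature of a spherical curve `γ` is encoded by
`γ̈ ≡ k·|γ̇|·(γ × γ̇) mod (γ, γ̇)`. -/
theorem stmt_16 (g : ℝ → Matrix (Fin 3) (Fin 3) ℝ)
    (ω n N n' N' n'' N'' : ℝ → Fin 3 → ℝ) (k K : ℝ → ℝ)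
    (horth : ∀ t, g t * (g t)ᵀ = 1) (hdet : ∀ t, (g t).det = 1)
    (hg : ∀ t, HasDerivAt g (hatMap (ω t) * g t) t)
    (hsphere : ∀ t, norm3 (n t) = 1)
    (hn : ∀ t, n t = (norm3 (ω t))⁻¹ • ω t)
    (hroll : ∀ t, (g t).mulVec (N t) = n t)
    (hrollv : ∀ t, (g t).mulVec (N' t) = n' t)
    (hn' : ∀ t, HasDerivAt n (n' t) t)
    (hn'' : ∀ t, HasDerivAt n' (n'' t) t)
    (hN' : ∀ t, HasDerivAt N (N' t) t)
    (hN'' : ∀ t, HasDerivAt N' (N'' t) t)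
    (hreg : ∀ t, norm3 (n' t) ≠ 0)
    (hk : ∀ t, ∃ α β : ℝ, n'' t =
      α • n t + β • n' t + (k t * norm3 (n' t)) • crossProduct (n t) (n' t))
    (hK : ∀ t, ∃ α β : ℝ, N'' t =
      α • N t + β • N' t + (K t * norm3 (N' t)) • crossProduct (N t) (N' t)) :
    ∀ t, K t = k t - norm3 (ω t) / norm3 (n' t) := by
  intro t
  have h1 : (g t)ᵀ * g t = 1 := mul_eq_one_comm.mp (horth t)
  have dp : ∀ u v, (g t *ᵥ u) ⬝ᵥ (g t *ᵥ v) = u ⬝ᵥ v := fun u v => dot_mulVec_same (g t) h1 u v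
  -- |ω| ≠ 0
  have hω0 : norm3 (ω t) ≠ 0 := by
    intro h
    have : n t = 0 := by rw [hn t, h, _root_.inv_zero, zero_smul]
    have h2 := hsphere t
    rw [this] at h2
    simp [norm3] at h2
  -- ω = |ω| • n
  have hωn : ω t = norm3 (ω t) • n t := by
    rw [hn t, smul_smul, mul_inv_cancel₀ hω0, one_smul]
  -- derivative of g *ᵥ N'
  have hd : HasDerivAt (fun s => g s *ᵥ N' s) ((hatMap (ω t) * g t) *ᵥ N' t + g t *ᵥ N'' t) t :=
    hasDerivAt_mulVec (hg t) (hN'' t)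
  have heqfun : (fun s => g s *ᵥ N' s) = n' := funext hrollv
  rw [heqfun] at hd
  have hmain : n'' t = (hatMap (ω t) * g t) *ᵥ N' t + g t *ᵥ N'' t := (hn'' t).unique hd
  have hcross : (hatMap (ω t) * g t) *ᵥ N' t =
      norm3 (ω t) • crossProduct (n t) (n' t) := by
    rw [← Matrix.mulVec_mulVec, hrollv, hatMap_mulVec]
    conv_lhs => rw [hωn]
    rw [LinearMap.map_smul, LinearMap.smul_apply]
  -- |N'| = |n'|
  have hNn' : norm3 (N' t) = norm3 (n' t) := by
    have h2 : norm3 (N' t) ^ 2 = norm3 (n' t) ^ 2 := by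
      rw [norm3_sq, norm3_sq, ← dp, hrollv]
    have ha : 0 ≤ norm3 (N' t) := Real.sqrt_nonneg _
    have hb : 0 ≤ norm3 (n' t) := Real.sqrt_nonneg _
    have h3 : (norm3 (N' t) - norm3 (n' t)) * (norm3 (N' t) + norm3 (n' t)) = 0 := by
      linear_combination h2
    rcases mul_eq_zero.mp h3 with h4 | h4
    · linarith
    · have hb' : norm3 (n' t) = 0 := by linarith
      exact absurd hb' (hreg t)
  obtain ⟨α, β, hKt⟩ := hK t
  have hgN'' : g t *ᵥ N'' t = α • n t + β • n' t +
      (K t * norm3 (n' t)) • crossProduct (n t) (n' t) := by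
    rw [hKt, Matrix.mulVec_add, Matrix.mulVec_add, Matrix.mulVec_smul, Matrix.mulVec_smul,
      Matrix.mulVec_smul, hroll, hrollv, mulVec_cross (g t) (horth t) (hdet t), hroll, hrollv,
      hNn']
  obtain ⟨α', β', hkt⟩ := hk t
  -- n ⬝ n = 1
  have hnn : n t ⬝ᵥ n t = 1 := by rw [← norm3_sq, hsphere t]; norm_num
  -- n ⬝ n' = 0
  have hnn' : n t ⬝ᵥ n' t = 0 := by
    have hds : HasDerivAt (fun s => ∑ i, n s i * n s i)
        (∑ i : Fin 3, (n' t i * n t i + n t i * n' t i)) t :=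
      HasDerivAt.fun_sum fun i _ => ((hasDerivAt_pi.mp (hn' t)) i).mul ((hasDerivAt_pi.mp (hn' t)) i)
    have hconst : (fun s => ∑ i, n s i * n s i) = fun _ => (1 : ℝ) := by
      funext s
      have : n s ⬝ᵥ n s = 1 := by rw [← norm3_sq, hsphere s]; norm_num
      simpa [dotProduct] using this
    rw [hconst] at hds
    have h0 := (hasDerivAt_const t (1 : ℝ)).unique hds
    have := h0.symm
    simp only [Fin.sum_univ_three] at this
    have hd3 := dot3 (n t) (n' t)
    nlinarith [this, hd3]
  -- c ⬝ c = n' ⬝ n'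
  set c := crossProduct (n t) (n' t) with hc
  have hcc : c ⬝ᵥ c = n' t ⬝ᵥ n' t := by
    rw [hc, cross_dot_cross, hnn, hnn', dotProduct_comm (n' t) (n t), hnn']
    ring
  have hcn : c ⬝ᵥ n t = 0 := by rw [dotProduct_comm, hc]; exact dot_self_cross _ _
  have hcn' : c ⬝ᵥ n' t = 0 := by rw [dotProduct_comm, hc]; exact dot_cross_self _ _
  have hs : n' t ⬝ᵥ n' t ≠ 0 := by
    rw [← norm3_sq]
    exact pow_ne_zero 2 (hreg t)
  -- combine
  have hEq : α' • n t + β' • n' t + (k t * norm3 (n' t)) • c =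
      norm3 (ω t) • c + (α • n t + β • n' t + (K t * norm3 (n' t)) • c) := by
    rw [← hkt, hmain, hcross, hgN'']
  have hdotc := congrArg (fun v => c ⬝ᵥ v) hEq
  simp only [dotProduct_add, dotProduct_smul, smul_eq_mul, hcn, hcn', hcc,
    mul_zero, add_zero, zero_add] at hdotc
  -- k|n'| * s = |ω| * s + K|n'| * s
  have hkey : k t * norm3 (n' t) = norm3 (ω t) + K t * norm3 (n' t) :=
    mul_right_cancel₀ hs (show (k t * norm3 (n' t)) * (n' t ⬝ᵥ n' t) =
      (norm3 (ω t) + K t * norm3 (n' t)) * (n' t ⬝ᵥ n' t) by linear_combination hdotc)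
  have hr := hreg t
  field_simp
  linarith [hkey]
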